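/- There is no binary linear locally repairable code with parameters [5, 4, 1] and locality 4; more generally, no linear code of positive dimension and minimum distance 1 over F_2 of length 5 has locality 4 while a [5,4,2] code with locality 4 exists. In particular, the propagation rule 'an [n,k,d;r] LRC yields an [n,k,d-1;r] LRC' fails for locally repairable codes. -/
import Mathlib


open Finset

/-- `R` (containing `i`) is a recovery set at coordinate `i` for the code `C`. -/
def IsRecoverySet {F : Type*} [Field F] {ι : Type*} [Fintype ι]
    (C : Submodule F (ι → F)) (i : ι) (R : Finset ι) : Prop :=
  i ∈ R ∧ ∀ u ∈ C, ∀ v ∈ C, (∀ j ∈ R, j ≠ i → u j = v j) → u i = v i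

/-- `C` has locality `r`: every coordinate has a recovery set of size at most `r+1`. -/
def HasLocality {F : Type*} [Field F] {ι : Type*} [Fintype ι]
    (C : Submodule F (ι → F)) (r : ℕ) : Prop :=
  ∀ i : ι, ∃ R : Finset ι, R.card ≤ r + 1 ∧ IsRecoverySet C i R

/-- Every nonzero codeword of `C` has Hamming weight at least `d`. -/
def DistAtLeast {F : Type*} [Field F] [DecidableEq F] {ι : Type*} [Fintype ι]
    (C : Submodule F (ι → F)) (d : ℕ) : Prop :=
  ∀ c ∈ C, c ≠ 0 → d ≤ hammingNorm c

/-- `C` has minimum distance exactly `d`. -/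
def IsMinDist {F : Type*} [Field F] [DecidableEq F] {ι : Type*} [Fintype ι]
    (C : Submodule F (ι → F)) (d : ℕ) : Prop :=
  (∃ c ∈ C, c ≠ 0 ∧ hammingNorm c = d) ∧ DistAtLeast C d

section Aux

/-- If a codeword has Hamming weight 1, its support is a singleton. -/
lemma weight_one_support {c : Fin 5 → ZMod 2} (hw : hammingNorm c = 1) :
    ∃ i, c i ≠ 0 ∧ ∀ j, j ≠ i → c j = 0 := by
  obtain ⟨i, hi⟩ := Finset.card_eq_one.mp hw
  refine ⟨i, ?_, ?_⟩
  · have : i ∈ ({i} : Finset (Fin 5)) := Finset.mem_singleton_self i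
    rw [← hi] at this
    exact (Finset.mem_filter.mp this).2
  · intro j hj
    by_contra h
    have : j ∈ ({i} : Finset (Fin 5)) := by
      rw [← hi]; exact Finset.mem_filter.mpr ⟨Finset.mem_univ j, h⟩
    exact hj (Finset.mem_singleton.mp this)

/-- The parity check map. -/
def pcheck : (Fin 5 → ZMod 2) →ₗ[ZMod 2] ZMod 2 where
  toFun x := ∑ i, x i
  map_add' x y := by simp [Finset.sum_add_distrib]
  map_smul' a x := by simp [Finset.mul_sum]

lemma pcheck_coord {x : Fin 5 → ZMod 2} (hx : x ∈ LinearMap.ker pcheck) (i : Fin 5) :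
    x i = ∑ j ∈ Finset.univ.erase i, x j := by
  have h0 : ∑ j, x j = 0 := hx
  have h := Finset.add_sum_erase Finset.univ x (Finset.mem_univ i)
  rw [h0] at h
  have := eq_neg_of_add_eq_zero_left h
  simpa [CharTwo.neg_eq] using this

end Aux

/-- no binary linear code of length 5 with positive dimension and minimum
distance 1 has locality 4, while a binary `[5,4,2]` code with locality 4 exists; hence the
propagation rule "an `[n,k,d;r]` LRC yields an `[n,k,d-1;r]` LRC" fails for LRCs. -/
theorem no_binary_5_4_1_LRC :
    (¬ ∃ C : Submodule (ZMod 2) (Fin 5 → ZMod 2),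
        0 < Module.finrank (ZMod 2) C ∧ IsMinDist C 1 ∧ HasLocality C 4) ∧
    (∃ C : Submodule (ZMod 2) (Fin 5 → ZMod 2),
        Module.finrank (ZMod 2) C = 4 ∧ IsMinDist C 2 ∧ HasLocality C 4) := by
  constructor
  · rintro ⟨C, -, ⟨⟨c, hc, hc0, hw⟩, -⟩, hloc⟩
    obtain ⟨i, hci, hcj⟩ := weight_one_support hw
    obtain ⟨R, -, hiR, hrec⟩ := hloc i
    exact hci (by simpa using hrec c hc 0 C.zero_mem (fun j _ hj => by simp [hcj j hj]))
  · refine ⟨LinearMap.ker pcheck, ?_, ⟨⟨![1,1,0,0,0], ?_, ?_, ?_⟩, ?_⟩, ?_⟩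
    · have hsurj : Function.Surjective pcheck := by
        intro y
        refine ⟨Pi.single 0 y, ?_⟩
        simp [pcheck, Finset.sum_pi_single']
      have h := LinearMap.finrank_range_add_finrank_ker pcheck
      rw [LinearMap.range_eq_top.mpr hsurj, finrank_top] at h
      simp only [Module.finrank_self, Module.finrank_pi, Fintype.card_fin] at h
      omega
    · show pcheck ![1,1,0,0,0] = 0
      simp [pcheck, Fin.sum_univ_five]; decide
    · decide
    · decide
    · intro x hx hx0
      by_contra hlt
      push_neg at hlt
      interval_cases h : hammingNorm x
      · exact hx0 (hammingNorm_eq_zero.mp h)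
      · obtain ⟨i, hci, hcj⟩ := weight_one_support h
        apply hci
        rw [pcheck_coord hx i]
        exact Finset.sum_eq_zero fun j hj => hcj j (Finset.ne_of_mem_erase hj)
    · intro i
      refine ⟨Finset.univ, by simp, Finset.mem_univ i, fun u hu v hv hagree => ?_⟩
      rw [pcheck_coord hu i, pcheck_coord hv i]
      exact Finset.sum_congr rfl fun j hj => hagree j (Finset.mem_univ j) (Finset.ne_of_mem_erase hj)
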